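/- Let σ = (Z,P) be a stability condition on a triangulated category D. Then A := P((0,1]) is the heart of a bounded t-structure on D, the central charge Z defines a stability function on A which has the Harder–Narasimhan property, and the objects of A that are semistable with respect to this stability function are precisely the nonzero objects of the subcategories P(φ) for 0 < φ ≤ 1. -/

import Mathlib

/-!
STATEMENT 6: a stability condition induces a bounded t-structure with heart
`P((0,1])` together with a stability function with the Harder–Narasimhan property,
whose semistable objects are the nonzero objects of the `P(φ)`, `0 < φ ≤ 1`.
-/

open CategoryTheory CategoryTheory.Limits CategoryTheory.Pretriangulated
open CategoryTheory.Triangulated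

universe v u

variable (C : Type u) [Category.{v} C] [HasZeroObject C] [HasShift C ℤ]
  [Preadditive C] [∀ n : ℤ, (CategoryTheory.shiftFunctor C n).Additive] [Pretriangulated C]

/-- A Harder–Narasimhan decomposition of an object `E` with respect to a collection of
full subcategories `P φ` (`φ : ℝ`). -/
structure HNFiltration (P : ℝ → Set C) (E : C) where
  n : ℕ
  phase : Fin n → ℝ
  phase_strictAnti : StrictAnti phase
  obj : Fin (n + 1) → C
  obj_zero : IsZero (obj 0)
  obj_last : obj (Fin.last n) = E
  fac : Fin n → C
  fac_mem : ∀ j, fac j ∈ P (phase j)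
  fac_nonzero : ∀ j, ¬ IsZero (fac j)
  triangle : ∀ j : Fin n, ∃ (f : obj j.castSucc ⟶ obj j.succ) (g : obj j.succ ⟶ fac j)
      (h : fac j ⟶ (obj j.castSucc)⟦(1 : ℤ)⟧), Triangle.mk f g h ∈ distTriang C

/-- A stability condition `σ = (Z, P)` on a triangulated category `C`. -/
structure StabilityCondition where
  Z : C → ℂ
  P : ℝ → Set C
  additive : ∀ T : Triangle C, (T ∈ distTriang C) → Z T.obj₂ = Z T.obj₁ + Z T.obj₃
  P_iso : ∀ (φ : ℝ) (A B : C), (A ≅ B) → A ∈ P φ → B ∈ P φ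
  P_zero : ∀ (φ : ℝ) (A : C), IsZero A → A ∈ P φ
  central : ∀ (φ : ℝ) (E : C), E ∈ P φ → ¬ IsZero E →
      ∃ m : ℝ, 0 < m ∧ Z E = m * Complex.exp (Real.pi * φ * Complex.I)
  shift : ∀ (φ : ℝ) (E : C), E ∈ P (φ + 1) ↔ E⟦(-1 : ℤ)⟧ ∈ P φ
  hom_zero : ∀ (φ₁ φ₂ : ℝ), φ₂ < φ₁ → ∀ (A B : C), A ∈ P φ₁ → B ∈ P φ₂ →
      ∀ f : A ⟶ B, f = 0
  HN : ∀ E : C, ¬ IsZero E → Nonempty (HNFiltration C P E)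

/-- The extension-closed full subcategory `P(I)` of `C` generated by the subcategories
`P(φ)` for `φ ∈ I`. -/
inductive PCat (P : ℝ → Set C) (I : Set ℝ) : C → Prop
  | of (φ : ℝ) (hφ : φ ∈ I) (E : C) (hE : E ∈ P φ) : PCat P I E
  | zero (E : C) (hE : IsZero E) : PCat P I E
  | iso (E F : C) (e : E ≅ F) (hE : PCat P I E) : PCat P I F
  | ext (A E B : C) (f : A ⟶ E) (g : E ⟶ B) (h : B ⟶ A⟦(1 : ℤ)⟧)
      (hT : Triangle.mk f g h ∈ distTriang C) (hA : PCat P I A) (hB : PCat P I B) :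
      PCat P I E

/-- A t-structure is bounded if every object lies in `D^{≤n} ∩ D^{≥m}` for some `m ≤ n`. -/
def TStructureIsBounded (t : TStructure C) : Prop :=
  ∀ X : C, ∃ m n : ℤ, t.le n X ∧ t.ge m X

/-- The heart `D^{≤0} ∩ D^{≥0}` of a t-structure, as a predicate on objects. -/
def heartP (t : TStructure C) : C → Prop := fun X => t.le 0 X ∧ t.ge 0 X

/-- The phase `φ ∈ (0,1]` of a complex number `z = m·exp(iπφ)` (`m > 0`). -/
noncomputable def phaseOf (z : ℂ) : ℝ := Complex.arg z / Real.pi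

/-- `Z` is a stability function on the subcategory `𝒜`: every nonzero object `E` of `𝒜`
satisfies `Z(E) = m·exp(iπφ)` with `m > 0` and `0 < φ ≤ 1`. -/
def IsStabilityFunctionOn (Z : C → ℂ) (𝒜 : C → Prop) : Prop :=
  ∀ E : C, 𝒜 E → ¬ IsZero E → ∃ m φ : ℝ, 0 < m ∧ 0 < φ ∧ φ ≤ 1 ∧
    Z E = m * Complex.exp (Real.pi * φ * Complex.I)

/-- `E` is semistable with respect to the stability function `Z` on the heart `𝒜`:
`E` is a nonzero object of `𝒜` and every nonzero subobject `A ⊆ E` in `𝒜` (i.e. a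
distinguished triangle `A → E → Q` with `A, Q ∈ 𝒜`) has phase `φ(A) ≤ φ(E)`. -/
def SemistableOn (Z : C → ℂ) (𝒜 : C → Prop) (E : C) : Prop :=
  𝒜 E ∧ ¬ IsZero E ∧
  ∀ (A Q : C) (f : A ⟶ E) (g : E ⟶ Q) (h : Q ⟶ A⟦(1 : ℤ)⟧),
    (Triangle.mk f g h ∈ distTriang C) → 𝒜 A → 𝒜 Q → ¬ IsZero A →
      phaseOf (Z A) ≤ phaseOf (Z E)

/-- `Z` has the Harder–Narasimhan property on the heart `𝒜`: every nonzero object of `𝒜`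
has a finite filtration (inside `𝒜`) with semistable factors of strictly decreasing phase. -/
def HasHNPropertyOn (Z : C → ℂ) (𝒜 : C → Prop) : Prop :=
  ∀ E : C, 𝒜 E → ¬ IsZero E → ∃ (n : ℕ) (obj : Fin (n + 1) → C) (fac : Fin n → C),
    IsZero (obj 0) ∧ obj (Fin.last n) = E ∧ (∀ j, 𝒜 (obj j)) ∧
    (∀ j : Fin n, SemistableOn C Z 𝒜 (fac j)) ∧
    (∀ j : Fin n, ∃ (f : obj j.castSucc ⟶ obj j.succ) (g : obj j.succ ⟶ fac j)
      (h : fac j ⟶ (obj j.castSucc)⟦(1 : ℤ)⟧), Triangle.mk f g h ∈ distTriang C) ∧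
    StrictAnti (fun j : Fin n => phaseOf (Z (fac j)))


open Complex

namespace StabProof

/-- the sector of complex numbers with argument in `(0, π]` -/
def Sector (z : ℂ) : Prop := 0 < z.im ∨ (z.im = 0 ∧ z.re < 0)

lemma Sector.ne_zero {z : ℂ} (hz : Sector z) : z ≠ 0 := by
  rintro rfl
  simp [Sector] at hz

lemma Sector.add {z w : ℂ} (hz : Sector z) (hw : Sector w) : Sector (z + w) := by
  rcases hz with hz | ⟨hz1, hz2⟩ <;> rcases hw with hw | ⟨hw1, hw2⟩
  · exact Or.inl (by simp only [Complex.add_im]; linarith)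
  · exact Or.inl (by simp only [Complex.add_im]; linarith)
  · exact Or.inl (by simp only [Complex.add_im]; linarith)
  · exact Or.inr ⟨by simp only [Complex.add_im]; linarith,
      by simp only [Complex.add_re]; linarith⟩

lemma Sector.arg_pos {z : ℂ} (hz : Sector z) : 0 < z.arg := by
  rcases hz with hz | ⟨hz1, hz2⟩
  · rcases lt_or_eq_of_le (Complex.arg_nonneg_iff.2 hz.le) with h | h
    · exact h
    · exfalso
      have := (Complex.arg_eq_zero_iff.1 h.symm).2
      linarith
  · rw [Complex.arg_eq_pi_iff.2 ⟨hz2, hz1⟩]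
    exact Real.pi_pos

lemma Sector.arg_le_pi {z : ℂ} (_ : Sector z) : z.arg ≤ Real.pi := Complex.arg_le_pi z

/-- re/im of `m · exp(iπφ)` -/
lemma exp_pi_mul_re (m φ : ℝ) :
    ((m : ℂ) * Complex.exp ((Real.pi : ℂ) * φ * Complex.I)).re = m * Real.cos (Real.pi * φ) := by
  have h : ((Real.pi : ℂ) * φ * Complex.I) = ((Real.pi * φ : ℝ) : ℂ) * Complex.I := by
    push_cast; ring
  rw [h, Complex.mul_re, Complex.ofReal_re, Complex.ofReal_im, Complex.exp_ofReal_mul_I_re,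
    Complex.exp_ofReal_mul_I_im]
  ring

lemma exp_pi_mul_im (m φ : ℝ) :
    ((m : ℂ) * Complex.exp ((Real.pi : ℂ) * φ * Complex.I)).im = m * Real.sin (Real.pi * φ) := by
  have h : ((Real.pi : ℂ) * φ * Complex.I) = ((Real.pi * φ : ℝ) : ℂ) * Complex.I := by
    push_cast; ring
  rw [h, Complex.mul_im, Complex.ofReal_re, Complex.ofReal_im, Complex.exp_ofReal_mul_I_re,
    Complex.exp_ofReal_mul_I_im]
  ring

lemma sector_exp {m φ : ℝ} (hm : 0 < m) (h0 : 0 < φ) (h1 : φ ≤ 1) :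
    Sector ((m : ℂ) * Complex.exp ((Real.pi : ℂ) * φ * Complex.I)) := by
  have hπ := Real.pi_pos
  rcases lt_or_eq_of_le h1 with h | h
  · left
    rw [exp_pi_mul_im]
    have hs : 0 < Real.sin (Real.pi * φ) :=
      Real.sin_pos_of_pos_of_lt_pi (by nlinarith) (by nlinarith)
    exact mul_pos hm hs
  · right
    subst h
    rw [exp_pi_mul_im, exp_pi_mul_re, mul_one, Real.sin_pi, Real.cos_pi]
    exact ⟨by ring, by nlinarith⟩

lemma arg_exp {m φ : ℝ} (hm : 0 < m) (h0 : 0 < φ) (h1 : φ ≤ 1) :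
    ((m : ℂ) * Complex.exp ((Real.pi : ℂ) * φ * Complex.I)).arg = Real.pi * φ := by
  have hπ := Real.pi_pos
  have h : ((Real.pi : ℂ) * φ * Complex.I) = ((Real.pi * φ : ℝ) : ℂ) * Complex.I := by
    push_cast; ring
  rw [h, Complex.arg_real_mul _ hm, Complex.exp_mul_I]
  exact Complex.arg_cos_add_sin_mul_I ⟨by nlinarith, by nlinarith⟩

/-- the key comparison criterion for arguments of sector elements -/
lemma sector_arg_le_iff {z w : ℂ} (hz : Sector z) (hw : Sector w) :
    z.arg ≤ w.arg ↔ z.im * w.re ≤ z.re * w.im := by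
  have hz0 := hz.ne_zero
  have hw0 := hw.ne_zero
  have habsz : (0:ℝ) < ‖z‖ := norm_pos_iff.mpr hz0
  have habsw : (0:ℝ) < ‖w‖ := norm_pos_iff.mpr hw0
  have habs : (0:ℝ) < ‖z‖ * ‖w‖ := mul_pos habsz habsw
  have key : Real.sin (z.arg - w.arg)
      = (z.im * w.re - z.re * w.im) / (‖z‖ * ‖w‖) := by
    rw [Real.sin_sub, Complex.sin_arg, Complex.cos_arg hz0, Complex.sin_arg, Complex.cos_arg hw0]
    field_simp
    try ring
  constructor
  · intro hle
    have hs : Real.sin (z.arg - w.arg) ≤ 0 := by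
      apply Real.sin_nonpos_of_nonpos_of_neg_pi_le (by linarith)
      have := hz.arg_pos
      have := hw.arg_le_pi
      linarith
    rw [key] at hs
    rcases div_nonpos_iff.1 hs with ⟨h1, h2⟩ | ⟨h1, h2⟩
    · linarith
    · linarith
  · intro hle
    by_contra hlt
    push_neg at hlt
    have hs : 0 < Real.sin (z.arg - w.arg) := by
      apply Real.sin_pos_of_pos_of_lt_pi (by linarith)
      have := hw.arg_pos
      have := hz.arg_le_pi
      linarith
    rw [key] at hs
    have h2 : Real.sin (z.arg - w.arg) ≤ 0 := by
      rw [key]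
      exact div_nonpos_of_nonpos_of_nonneg (by linarith) habs.le
    linarith

/-- adding something of strictly smaller argument strictly decreases the argument -/
lemma sector_arg_add_lt {z w : ℂ} (hz : Sector z) (hw : Sector w) (h : w.arg < z.arg) :
    (z + w).arg < z.arg := by
  have hzw := hz.add hw
  have h1 : ¬ (z.im * w.re ≤ z.re * w.im) := by
    intro hc
    exact absurd ((sector_arg_le_iff hz hw).2 hc) (not_le.2 h)
  push_neg at h1
  by_contra hc
  push_neg at hc
  have := (sector_arg_le_iff hz hzw).1 hc
  simp only [Complex.add_re, Complex.add_im] at this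
  nlinarith

end StabProof

namespace StabProof

open Set ZeroObject

section Cat
variable {C : Type u} [Category.{v} C] [HasZeroObject C] [HasShift C ℤ]
  [Preadditive C] [∀ n : ℤ, (CategoryTheory.shiftFunctor C n).Additive] [Pretriangulated C]

lemma PCat_mono {P : ℝ → Set C} {I J : Set ℝ} (hIJ : I ⊆ J) {X : C} (h : PCat C P I X) :
    PCat C P J X := by
  induction h with
  | of φ hφ E hE => exact PCat.of φ (hIJ hφ) E hE
  | zero E hE => exact PCat.zero E hE
  | iso E F e hE ih => exact PCat.iso E F e ih
  | ext A E B f g h hT hA hB ihA ihB => exact PCat.ext A E B f g h hT ihA ihB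

variable (σ : StabilityCondition C)

lemma P_shift_up (φ : ℝ) {E : C} (hE : E ∈ σ.P φ) : E⟦(1:ℤ)⟧ ∈ σ.P (φ + 1) := by
  apply (σ.shift φ (E⟦(1:ℤ)⟧)).2
  exact σ.P_iso φ E _ ((shiftFunctorCompIsoId C (1:ℤ) (-1:ℤ) (by ring)).symm.app E) hE

lemma P_shift_down (φ : ℝ) {E : C} (hE : E ∈ σ.P φ) : E⟦(-1:ℤ)⟧ ∈ σ.P (φ - 1) := by
  apply (σ.shift (φ - 1) E).1
  rwa [sub_add_cancel]

lemma PCat_shift_one {I J : Set ℝ} (hIJ : ∀ φ ∈ I, φ + 1 ∈ J) {X : C}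
    (hX : PCat C σ.P I X) : PCat C σ.P J (X⟦(1:ℤ)⟧) := by
  induction hX with
  | of φ hφ E hE => exact PCat.of (φ+1) (hIJ φ hφ) _ (P_shift_up σ φ hE)
  | zero E hE => exact PCat.zero _ ((shiftFunctor C (1:ℤ)).map_isZero hE)
  | iso E F e hE ih => exact PCat.iso _ _ ((shiftFunctor C (1:ℤ)).mapIso e) ih
  | ext A E B f g h hT hA hB ihA ihB =>
    have hT3 := rot_of_distTriang _ (rot_of_distTriang _ (rot_of_distTriang _ hT))
    exact PCat.ext (A⟦(1:ℤ)⟧) (E⟦(1:ℤ)⟧) (B⟦(1:ℤ)⟧)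
      (Triangle.mk f g h).rotate.rotate.rotate.mor₁
      (Triangle.mk f g h).rotate.rotate.rotate.mor₂
      (Triangle.mk f g h).rotate.rotate.rotate.mor₃ hT3 ihA ihB


lemma PCat_shift_neg_one {I J : Set ℝ} (hIJ : ∀ φ ∈ I, φ - 1 ∈ J) {X : C}
    (hX : PCat C σ.P I X) : PCat C σ.P J (X⟦(-1:ℤ)⟧) := by
  induction hX with
  | of φ hφ E hE => exact PCat.of (φ-1) (hIJ φ hφ) _ (P_shift_down σ φ hE)
  | zero E hE => exact PCat.zero _ ((shiftFunctor C (-1:ℤ)).map_isZero hE)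
  | iso E F e hE ih => exact PCat.iso _ _ ((shiftFunctor C (-1:ℤ)).mapIso e) ih
  | ext A E B f g h hT hA hB ihA ihB =>
    have hT3 := inv_rot_of_distTriang _ (inv_rot_of_distTriang _ (inv_rot_of_distTriang _ hT))
    exact PCat.ext (A⟦(-1:ℤ)⟧) (E⟦(-1:ℤ)⟧) (B⟦(-1:ℤ)⟧)
      (Triangle.mk f g h).invRotate.invRotate.invRotate.mor₁
      (Triangle.mk f g h).invRotate.invRotate.invRotate.mor₂
      (Triangle.mk f g h).invRotate.invRotate.invRotate.mor₃ hT3 ihA ihB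

lemma PCat_shift (k : ℤ) {I : Set ℝ} {X : C} (hX : PCat C σ.P I X) :
    ∀ {J : Set ℝ}, (∀ φ ∈ I, φ + (k:ℝ) ∈ J) → PCat C σ.P J (X⟦k⟧) := by
  induction k using Int.induction_on with
  | zero =>
    intro J hIJ
    refine PCat.iso X _ ((shiftFunctorZero C ℤ).symm.app X) (PCat_mono ?_ hX)
    intro φ hφ
    simpa using hIJ φ hφ
  | succ k ih =>
    intro J hIJ
    have h1 : PCat C σ.P {ψ | ∃ φ ∈ I, ψ = φ + (k:ℝ)} (X⟦(k:ℤ)⟧) :=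
      ih (fun φ hφ => ⟨φ, hφ, rfl⟩)
    have h2 : PCat C σ.P J ((X⟦(k:ℤ)⟧)⟦(1:ℤ)⟧) := by
      refine PCat_shift_one σ ?_ h1
      rintro ψ ⟨φ, hφ, rfl⟩
      have := hIJ φ hφ
      push_cast at this
      rw [add_assoc]
      exact this
    exact PCat.iso _ _ ((shiftFunctorAdd' C (k:ℤ) (1:ℤ) ((k:ℤ)+1) rfl).symm.app X) h2
  | pred k ih =>
    intro J hIJ
    have h1 : PCat C σ.P {ψ | ∃ φ ∈ I, ψ = φ + (-k:ℝ)} (X⟦(-k:ℤ)⟧) :=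
      ih (fun φ hφ => ⟨φ, hφ, by push_cast; ring⟩)
    have h2 : PCat C σ.P J ((X⟦(-k:ℤ)⟧)⟦(-1:ℤ)⟧) := by
      refine PCat_shift_neg_one σ ?_ h1
      rintro ψ ⟨φ, hφ, rfl⟩
      have := hIJ φ hφ
      push_cast at this
      rw [add_sub_assoc]
      exact this
    exact PCat.iso _ _ ((shiftFunctorAdd' C (-k:ℤ) (-1:ℤ) (-(k:ℤ)-1) (by ring)).symm.app X) h2

lemma hom_zero_P_left {J : Set ℝ} {B : C} (hB : PCat C σ.P J B) :
    ∀ (a : ℝ) (A : C), A ∈ σ.P a → (∀ b ∈ J, b < a) → ∀ f : A ⟶ B, f = 0 := by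
  induction hB with
  | of ψ hψ E hE =>
    intro a A hA hJ f
    exact σ.hom_zero a ψ (hJ ψ hψ) A E hA hE f
  | zero E hE =>
    intro a A hA hJ f
    exact hE.eq_of_tgt f 0
  | iso E F e hE ih =>
    intro a A hA hJ f
    have h1 : f ≫ e.inv = 0 := ih a A hA hJ _
    calc f = (f ≫ e.inv) ≫ e.hom := by simp
    _ = 0 := by rw [h1, zero_comp]
  | ext B₁ E B₃ f' g' h' hT hB₁ hB₃ ih₁ ih₃ =>
    intro a A hA hJ u
    have h3 : u ≫ g' = 0 := ih₃ a A hA hJ _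
    obtain ⟨v, hv⟩ := Triangle.coyoneda_exact₂ _ hT u h3
    have hv0 : v = 0 := ih₁ a A hA hJ v
    rw [hv, hv0]; exact zero_comp

lemma hom_zero_PCat {I J : Set ℝ} {A B : C} (hA : PCat C σ.P I A) (hB : PCat C σ.P J B)
    (hIJ : ∀ a ∈ I, ∀ b ∈ J, b < a) : ∀ f : A ⟶ B, f = 0 := by
  induction hA with
  | of φ hφ E hE => exact hom_zero_P_left σ hB φ E hE (fun b hb => hIJ φ hφ b hb)
  | zero E hE => intro f; exact hE.eq_of_src f 0
  | iso E F e hE ih =>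
    intro f
    have h1 : e.hom ≫ f = 0 := ih (e.hom ≫ f)
    calc f = e.inv ≫ (e.hom ≫ f) := by simp
    _ = 0 := by rw [h1, comp_zero]
  | ext A₁ E A₃ f' g' h' hT h1 h3 ih1 ih3 =>
    intro u
    have hf : f' ≫ u = 0 := ih1 _
    obtain ⟨w, hw⟩ := Triangle.yoneda_exact₂ _ hT u hf
    have hw0 : w = 0 := ih3 w
    rw [hw, hw0]; exact comp_zero

lemma Z_zero' : σ.Z (0 : C) = 0 := by
  have h := σ.additive (contractibleTriangle (0:C)) (contractible_distinguished (0:C))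
  dsimp [contractibleTriangle] at h
  have := h.symm
  simpa using this

lemma Z_iso {A B : C} (e : A ≅ B) : σ.Z A = σ.Z B := by
  have hd : Triangle.mk e.hom (0 : B ⟶ (0:C)) (0 : (0:C) ⟶ A⟦(1:ℤ)⟧) ∈ distTriang C := by
    refine isomorphic_distinguished _ (contractible_distinguished A) _ ?_
    exact Triangle.isoMk _ _ (Iso.refl A) e.symm (Iso.refl 0) (by exact (e.hom_inv_id).trans (Category.id_comp _).symm) (by exact IsZero.eq_of_tgt (isZero_zero C) _ _) (by exact IsZero.eq_of_src (isZero_zero C) _ _)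
  have h : σ.Z B = σ.Z A + σ.Z (0:C) := σ.additive _ hd
  rw [h, Z_zero' σ, add_zero]

lemma Z_isZero {A : C} (hA : IsZero A) : σ.Z A = 0 := by
  rw [Z_iso σ hA.isoZero, Z_zero' σ]

lemma HN_obj_mem {X : C} (F : HNFiltration C σ.P X) {I : Set ℝ} (k : Fin (F.n+1)) :
    (∀ j : Fin F.n, (j:ℕ) < (k:ℕ) → F.phase j ∈ I) → PCat C σ.P I (F.obj k) := by
  induction k using Fin.induction with
  | zero => intro _; exact PCat.zero _ F.obj_zero
  | succ i ih =>
    intro hI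
    obtain ⟨f, g, h, hT⟩ := F.triangle i
    refine PCat.ext _ _ _ f g h hT (ih (fun j hj => hI j ?_)) (PCat.of _ (hI i ?_) _ (F.fac_mem i))
    · have h1 : (j:ℕ) < ((i.castSucc : Fin (F.n+1)):ℕ) := hj
      have h2 : ((i.castSucc : Fin (F.n+1)):ℕ) = (i:ℕ) := Fin.coe_castSucc i
      have h3 : ((i.succ : Fin (F.n+1)):ℕ) = (i:ℕ)+1 := Fin.val_succ i
      omega
    · have h3 : ((i.succ : Fin (F.n+1)):ℕ) = (i:ℕ)+1 := Fin.val_succ i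
      omega

lemma HN_pos_n {X : C} (F : HNFiltration C σ.P X) (hX : ¬ IsZero X) : 0 < F.n := by
  by_contra h
  push_neg at h
  have hn : F.n = 0 := by omega
  have e : (0 : Fin (F.n+1)) = Fin.last F.n := by
    ext
    simp [hn]
  apply hX
  rw [← F.obj_last, ← e]
  exact F.obj_zero

lemma HN_map_from_top {X : C} (F : HNFiltration C σ.P X) (hn : 0 < F.n) :
    ∀ (k : ℕ) (hk : k < F.n), ∃ s : F.fac ⟨0, hn⟩ ⟶ F.obj (⟨k, hk⟩ : Fin F.n).succ, s ≠ 0 := by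
  intro k
  induction k with
  | zero =>
    intro hk
    obtain ⟨f, g, h, hT⟩ := F.triangle ⟨0, hn⟩
    have hz : IsZero (F.obj (⟨0, hn⟩ : Fin F.n).castSucc) := by
      have e : (⟨0, hn⟩ : Fin F.n).castSucc = (0 : Fin (F.n+1)) := by
        ext; simp
      rw [e]
      exact F.obj_zero
    have : IsIso g := (Triangle.isZero₁_iff_isIso₂ _ hT).1 hz
    refine ⟨inv g, fun h0 => ?_⟩
    have hid : 𝟙 (F.fac ⟨0, hn⟩) = 0 := by
      rw [← IsIso.inv_hom_id g, h0, zero_comp]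
    exact F.fac_nonzero ⟨0, hn⟩ ((Limits.IsZero.iff_id_eq_zero _).2 hid)
  | succ k ih =>
    intro hk
    have hk' : k < F.n := by omega
    obtain ⟨s, hs⟩ := ih hk'
    obtain ⟨f, g, h, hT⟩ := F.triangle ⟨k+1, hk⟩
    refine ⟨s ≫ f, fun h0 => ?_⟩
    obtain ⟨w, hw⟩ := Triangle.coyoneda_exact₂ _ (inv_rot_of_distTriang _ hT) s h0
    have hlt : F.phase ⟨k+1, hk⟩ - 1 < F.phase ⟨0, hn⟩ := by
      have := F.phase_strictAnti (show (⟨0, hn⟩ : Fin F.n) < ⟨k+1, hk⟩ by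
        simp [Fin.lt_def])
      linarith
    have hw0 : w = 0 := σ.hom_zero _ _ hlt _ _ (F.fac_mem ⟨0, hn⟩)
      (P_shift_down σ _ (F.fac_mem ⟨k+1, hk⟩)) w
    exact hs (by rw [hw, hw0]; exact zero_comp)

lemma HN_map_from_top' {X : C} (F : HNFiltration C σ.P X) (hn : 0 < F.n) :
    ∃ s : F.fac ⟨0, hn⟩ ⟶ X, s ≠ 0 := by
  have h := HN_map_from_top σ F hn (F.n - 1) (by omega)
  have e : (⟨F.n - 1, by omega⟩ : Fin F.n).succ = Fin.last F.n := by
    ext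
    have := Fin.val_succ (⟨F.n - 1, by omega⟩ : Fin F.n)
    simp only [this, Fin.val_last]
    omega
  rw [e, F.obj_last] at h
  exact h

lemma HN_map_to_bot {X : C} (F : HNFiltration C σ.P X) (hn : 0 < F.n) :
    ∃ s : X ⟶ F.fac ⟨F.n - 1, by omega⟩, s ≠ 0 := by
  have key : ∃ s : F.obj (⟨F.n - 1, by omega⟩ : Fin F.n).succ ⟶ F.fac ⟨F.n - 1, by omega⟩,
      s ≠ 0 := by
    obtain ⟨f, g, h, hT⟩ := F.triangle ⟨F.n - 1, by omega⟩
    refine ⟨g, fun h0 => ?_⟩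
    obtain ⟨w, hw⟩ := Triangle.yoneda_exact₃ _ hT
      (𝟙 (F.fac ⟨F.n - 1, by omega⟩)) (by rw [show g = 0 from h0]; exact zero_comp)
    have hobj : PCat C σ.P (Set.Ici (F.phase ⟨F.n - 1, by omega⟩))
        (F.obj (⟨F.n - 1, by omega⟩ : Fin F.n).castSucc) := by
      refine HN_obj_mem σ F _ (fun j hj => ?_)
      refine F.phase_strictAnti.antitone (show j ≤ (⟨F.n - 1, by omega⟩ : Fin F.n) from ?_)
      rw [Fin.le_def]
      exact (show (j:ℕ) ≤ F.n - 1 from by have := j.isLt; omega)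
    have hmem : PCat C σ.P (Set.Ici (F.phase ⟨F.n - 1, by omega⟩ + 1))
        ((F.obj (⟨F.n - 1, by omega⟩ : Fin F.n).castSucc)⟦(1:ℤ)⟧) :=
      PCat_shift_one σ (fun φ hφ => by
        simp only [Set.mem_Ici] at hφ ⊢
        linarith) hobj
    have hw0 : w = 0 := hom_zero_PCat σ hmem
      (show PCat C σ.P {F.phase ⟨F.n - 1, by omega⟩} _ from PCat.of _ (Set.mem_singleton _) _ (F.fac_mem _))
      (fun a ha b hb => by
        simp only [Set.mem_singleton_iff] at hb
        simp only [Set.mem_Ici] at ha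
        subst hb
        linarith) w
    have hid : 𝟙 (F.fac (⟨F.n - 1, by omega⟩ : Fin F.n)) = 0 := by
      rw [hw, hw0]; exact comp_zero
    exact F.fac_nonzero _ ((Limits.IsZero.iff_id_eq_zero _).2 hid)
  have e : (⟨F.n - 1, by omega⟩ : Fin F.n).succ = Fin.last F.n := by
    ext
    have := Fin.val_succ (⟨F.n - 1, by omega⟩ : Fin F.n)
    simp only [this, Fin.val_last]
    omega
  rw [e, F.obj_last] at key
  exact key

lemma HN_phase_mem {X : C} (F : HNFiltration C σ.P X)
    (h1 : PCat C σ.P (Set.Ioi (0:ℝ)) X) (h2 : PCat C σ.P (Set.Iic (1:ℝ)) X) :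
    ∀ j, F.phase j ∈ Set.Ioc (0:ℝ) 1 := by
  intro j
  have hn : 0 < F.n := lt_of_le_of_lt (Nat.zero_le _) j.isLt
  constructor
  · have hb : 0 < F.phase ⟨F.n - 1, by omega⟩ := by
      by_contra hc
      push_neg at hc
      obtain ⟨s, hs⟩ := HN_map_to_bot σ F hn
      exact hs (hom_zero_PCat σ h1
        (show PCat C σ.P {F.phase ⟨F.n - 1, by omega⟩} _ from PCat.of _ (Set.mem_singleton _) _ (F.fac_mem _))
        (fun a ha b hb => by
          simp only [Set.mem_singleton_iff] at hb
          simp only [Set.mem_Ioi] at ha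
          subst hb
          linarith) s)
    have hle : F.phase ⟨F.n - 1, by omega⟩ ≤ F.phase j :=
      F.phase_strictAnti.antitone (show j ≤ (⟨F.n - 1, by omega⟩ : Fin F.n) from by
        rw [Fin.le_def]
        exact (show (j:ℕ) ≤ F.n - 1 from by have := j.isLt; omega))
    linarith
  · have ht : F.phase ⟨0, hn⟩ ≤ 1 := by
      by_contra hc
      push_neg at hc
      obtain ⟨s, hs⟩ := HN_map_from_top' σ F hn
      exact hs (hom_zero_PCat σ
        (show PCat C σ.P {F.phase ⟨0, hn⟩} _ from PCat.of _ (Set.mem_singleton _) _ (F.fac_mem _)) h2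
        (fun a ha b hb => by
          simp only [Set.mem_singleton_iff] at ha
          simp only [Set.mem_Iic] at hb
          subst ha
          linarith) s)
    have hle : F.phase j ≤ F.phase ⟨0, hn⟩ :=
      F.phase_strictAnti.antitone (show (⟨0, hn⟩ : Fin F.n) ≤ j from by
        rw [Fin.le_def]
        exact Nat.zero_le _)
    linarith

lemma mem_Iic_of_orth {c : ℝ} {Q : C}
    (horth : ∀ ψ, c < ψ → ∀ S, S ∈ σ.P ψ → ∀ s : S ⟶ Q, s = 0) :
    PCat C σ.P (Set.Iic c) Q := by
  by_cases hQ : IsZero Q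
  · exact PCat.zero _ hQ
  obtain ⟨F⟩ := σ.HN Q hQ
  have hn := HN_pos_n σ F hQ
  have htop : F.phase ⟨0, hn⟩ ≤ c := by
    by_contra hlt
    push_neg at hlt
    obtain ⟨s, hs⟩ := HN_map_from_top' σ F hn
    exact hs (horth _ hlt _ (F.fac_mem ⟨0, hn⟩) s)
  have h := HN_obj_mem σ F (I := Set.Iic c) (Fin.last F.n) (fun j _ => by
    have hle : F.phase j ≤ F.phase ⟨0, hn⟩ :=
      F.phase_strictAnti.antitone (show (⟨0, hn⟩ : Fin F.n) ≤ j from by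
        rw [Fin.le_def]
        exact Nat.zero_le _)
    simp only [Set.mem_Iic]
    linarith)
  rwa [F.obj_last] at h

lemma exp_mul_bound {m m' ψ φ : ℝ} (hm : 0 ≤ m) (hm' : 0 ≤ m') (h1 : ψ ≤ φ) (h2 : φ - ψ ≤ 1) :
    ((m:ℂ) * Complex.exp ((Real.pi:ℂ) * ψ * Complex.I)).im *
      ((m':ℂ) * Complex.exp ((Real.pi:ℂ) * φ * Complex.I)).re ≤
    ((m:ℂ) * Complex.exp ((Real.pi:ℂ) * ψ * Complex.I)).re *
      ((m':ℂ) * Complex.exp ((Real.pi:ℂ) * φ * Complex.I)).im := by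
  rw [exp_pi_mul_re, exp_pi_mul_im, exp_pi_mul_re, exp_pi_mul_im]
  have hπ := Real.pi_pos
  have hsin : Real.sin (Real.pi * ψ - Real.pi * φ) ≤ 0 :=
    Real.sin_nonpos_of_nonpos_of_neg_pi_le (by nlinarith) (by nlinarith)
  rw [Real.sin_sub] at hsin
  nlinarith [mul_nonneg hm hm', hsin]

lemma HN_Z {X : C} (F : HNFiltration C σ.P X) (hph : ∀ j, F.phase j ∈ Set.Ioc (0:ℝ) 1) :
    ∀ k : Fin (F.n+1), IsZero (F.obj k) ∨ (Sector (σ.Z (F.obj k)) ∧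
      ∀ c : ℝ, 0 < c → c ≤ 1 →
        ((∀ j : Fin F.n, (j:ℕ) < (k:ℕ) → F.phase j ≤ c) →
          (σ.Z (F.obj k)).im * (((1:ℝ):ℂ) * Complex.exp ((Real.pi:ℂ) * c * Complex.I)).re ≤
          (σ.Z (F.obj k)).re * (((1:ℝ):ℂ) * Complex.exp ((Real.pi:ℂ) * c * Complex.I)).im) ∧
        ((∀ j : Fin F.n, (j:ℕ) < (k:ℕ) → c ≤ F.phase j) →
          (((1:ℝ):ℂ) * Complex.exp ((Real.pi:ℂ) * c * Complex.I)).im * (σ.Z (F.obj k)).re ≤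
          (((1:ℝ):ℂ) * Complex.exp ((Real.pi:ℂ) * c * Complex.I)).re * (σ.Z (F.obj k)).im)) := by
  intro k
  induction k using Fin.induction with
  | zero => exact Or.inl F.obj_zero
  | succ i ih =>
    obtain ⟨f, g, h, hT⟩ := F.triangle i
    have hadd : σ.Z (F.obj i.succ) = σ.Z (F.obj i.castSucc) + σ.Z (F.fac i) := σ.additive _ hT
    obtain ⟨m, hm, hZf⟩ := σ.central _ _ (F.fac_mem i) (F.fac_nonzero i)
    have hphi := hph i
    have hsecf : Sector (σ.Z (F.fac i)) := by rw [hZf]; exact sector_exp hm hphi.1 hphi.2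
    have hlt_i_succ : (i:ℕ) < ((i.succ : Fin (F.n+1)):ℕ) := by rw [Fin.val_succ]; omega
    right
    rcases ih with hz | ⟨hsec, hb⟩
    · have h0 : σ.Z (F.obj i.castSucc) = 0 := Z_isZero σ hz
      rw [hadd, h0, zero_add]
      refine ⟨hsecf, fun c hc0 hc1 => ⟨fun hub => ?_, fun hlb => ?_⟩⟩
      · rw [hZf]
        exact exp_mul_bound hm.le zero_le_one (hub i hlt_i_succ) (by linarith [hphi.1])
      · rw [hZf]
        exact exp_mul_bound zero_le_one hm.le (hlb i hlt_i_succ) (by linarith [hphi.2])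
    · refine ⟨by rw [hadd]; exact hsec.add hsecf, fun c hc0 hc1 => ⟨fun hub => ?_, fun hlb => ?_⟩⟩
      · have h1 := (hb c hc0 hc1).1 (fun j hj => hub j (by
          rw [Fin.coe_castSucc] at hj
          rw [Fin.val_succ]
          omega))
        have h2 : (σ.Z (F.fac i)).im * (((1:ℝ):ℂ) * Complex.exp ((Real.pi:ℂ) * c * Complex.I)).re ≤
            (σ.Z (F.fac i)).re * (((1:ℝ):ℂ) * Complex.exp ((Real.pi:ℂ) * c * Complex.I)).im := by
          rw [hZf]
          exact exp_mul_bound hm.le zero_le_one (hub i hlt_i_succ) (by linarith [hphi.1])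
        rw [hadd]
        simp only [Complex.add_re, Complex.add_im]
        rw [add_mul, add_mul]
        linarith
      · have h1 := (hb c hc0 hc1).2 (fun j hj => hlb j (by
          rw [Fin.coe_castSucc] at hj
          rw [Fin.val_succ]
          omega))
        have h2 : (((1:ℝ):ℂ) * Complex.exp ((Real.pi:ℂ) * c * Complex.I)).im * (σ.Z (F.fac i)).re ≤
            (((1:ℝ):ℂ) * Complex.exp ((Real.pi:ℂ) * c * Complex.I)).re * (σ.Z (F.fac i)).im := by
          rw [hZf]
          exact exp_mul_bound zero_le_one hm.le (hlb i hlt_i_succ) (by linarith [hphi.2])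
        rw [hadd]
        simp only [Complex.add_re, Complex.add_im]
        rw [mul_add, mul_add]
        linarith

lemma HN_Z_arg_le {X : C} (F : HNFiltration C σ.P X) (hph : ∀ j, F.phase j ∈ Set.Ioc (0:ℝ) 1)
    (k : Fin (F.n+1)) (hnz : ¬ IsZero (F.obj k)) {c : ℝ} (hc0 : 0 < c) (hc1 : c ≤ 1)
    (hub : ∀ j : Fin F.n, (j:ℕ) < (k:ℕ) → F.phase j ≤ c) :
    (σ.Z (F.obj k)).arg ≤ Real.pi * c := by
  rcases HN_Z σ F hph k with hz | ⟨hsec, hb⟩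
  · exact absurd hz hnz
  have h1 := (hb c hc0 hc1).1 hub
  have h2 := (sector_arg_le_iff hsec (sector_exp one_pos hc0 hc1)).2 h1
  rwa [arg_exp one_pos hc0 hc1] at h2

lemma HN_Z_arg_ge {X : C} (F : HNFiltration C σ.P X) (hph : ∀ j, F.phase j ∈ Set.Ioc (0:ℝ) 1)
    (k : Fin (F.n+1)) (hnz : ¬ IsZero (F.obj k)) {c : ℝ} (hc0 : 0 < c) (hc1 : c ≤ 1)
    (hlb : ∀ j : Fin F.n, (j:ℕ) < (k:ℕ) → c ≤ F.phase j) :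
    Real.pi * c ≤ (σ.Z (F.obj k)).arg := by
  rcases HN_Z σ F hph k with hz | ⟨hsec, hb⟩
  · exact absurd hz hnz
  have h1 := (hb c hc0 hc1).2 hlb
  have h2 := (sector_arg_le_iff (sector_exp one_pos hc0 hc1) hsec).2 h1
  rwa [arg_exp one_pos hc0 hc1] at h2

lemma Z_sector {X : C} (hX : PCat C σ.P (Set.Ioc (0:ℝ) 1) X) : ¬ IsZero X → Sector (σ.Z X) := by
  induction hX with
  | of φ hφ E hE =>
    intro hnz
    obtain ⟨m, hm, hZ⟩ := σ.central φ E hE hnz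
    rw [hZ]
    exact sector_exp hm hφ.1 hφ.2
  | zero E hE => intro hnz; exact absurd hE hnz
  | iso E F' e hE ih =>
    intro hnz
    have hnzE : ¬ IsZero E := fun hz => hnz (hz.of_iso e.symm)
    rw [← Z_iso σ e]
    exact ih hnzE
  | ext A E B f g h hT hA hB ihA ihB =>
    intro hnz
    have hadd : σ.Z E = σ.Z A + σ.Z B := σ.additive _ hT
    by_cases hzA : IsZero A <;> by_cases hzB : IsZero B
    · exact absurd (Triangle.isZero₂_of_isZero₁₃ _ hT hzA hzB) hnz
    · rw [hadd, Z_isZero σ hzA, zero_add]; exact ihB hzB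
    · rw [hadd, Z_isZero σ hzB, add_zero]; exact ihA hzA
    · rw [hadd]; exact (ihA hzA).add (ihB hzB)

lemma phaseOf_P {E : C} {φ : ℝ} (h0 : 0 < φ) (h1 : φ ≤ 1) (hE : E ∈ σ.P φ)
    (hnz : ¬ IsZero E) : phaseOf (σ.Z E) = φ := by
  obtain ⟨m, hm, hZ⟩ := σ.central φ E hE hnz
  rw [phaseOf, hZ, arg_exp hm h0 h1, mul_comm, mul_div_assoc, div_self Real.pi_ne_zero, mul_one]

lemma trunc (c : ℝ) (X : C) :
    ∃ (A B : C) (f : A ⟶ X) (g : X ⟶ B) (h : B ⟶ A⟦(1:ℤ)⟧),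
      (Triangle.mk f g h ∈ distTriang C) ∧ PCat C σ.P (Set.Ioi c) A ∧
        PCat C σ.P (Set.Iic c) B := by
  by_cases hX : IsZero X
  · exact ⟨X, 0, 𝟙 X, 0, 0, contractible_distinguished X, PCat.zero _ hX,
      PCat.zero _ (isZero_zero C)⟩
  obtain ⟨F⟩ := σ.HN X hX
  suffices hsuf : ∀ k : Fin (F.n+1), ∃ (A B : C) (f : A ⟶ F.obj k) (g : F.obj k ⟶ B)
      (h : B ⟶ A⟦(1:ℤ)⟧), (Triangle.mk f g h ∈ distTriang C) ∧ PCat C σ.P (Set.Ioi c) A ∧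
        PCat C σ.P (Set.Iic c) B by
    have h := hsuf (Fin.last F.n)
    rwa [F.obj_last] at h
  intro k
  induction k using Fin.induction with
  | zero =>
    exact ⟨F.obj 0, 0, 𝟙 _, 0, 0, contractible_distinguished _, PCat.zero _ F.obj_zero,
      PCat.zero _ (isZero_zero C)⟩
  | succ i ih =>
    obtain ⟨f, g, h, hT⟩ := F.triangle i
    by_cases hci : c < F.phase i
    · refine ⟨F.obj i.succ, 0, 𝟙 _, 0, 0, contractible_distinguished _, ?_,
        PCat.zero _ (isZero_zero C)⟩
      refine HN_obj_mem σ F (I := Set.Ioi c) i.succ (fun j hj => ?_)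
      have hle : F.phase i ≤ F.phase j := by
        refine F.phase_strictAnti.antitone ?_
        rw [Fin.le_def]
        rw [Fin.val_succ] at hj
        exact (show (j:ℕ) ≤ (i:ℕ) from by omega)
      simp only [Set.mem_Ioi]
      linarith
    · push_neg at hci
      obtain ⟨A, B', a, b, e, hT1, hA, hB'⟩ := ih
      obtain ⟨Q, q, r, hT3⟩ := Pretriangulated.distinguished_cocone_triangle (a ≫ f)
      obtain ⟨u, hu₁, hu₂⟩ := complete_distinguished_triangle_morphism
        (Triangle.mk a b e) (Triangle.mk (a ≫ f) q r) hT1 hT3 (𝟙 A) f (by exact (Category.id_comp _).symm)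
      obtain ⟨v, hv₁, hv₂⟩ := complete_distinguished_triangle_morphism
        (Triangle.mk (a ≫ f) q r) (Triangle.mk f g h) hT3 hT a (𝟙 _) (by exact Category.comp_id _)
      refine ⟨A, Q, a ≫ f, q, r, hT3, hA, mem_Iic_of_orth σ ?_⟩
      intro ψ hψ S hS s
      -- step 1 : s ≫ r = 0
      have hsv : s ≫ v = 0 :=
        σ.hom_zero ψ (F.phase i) (lt_of_le_of_lt hci hψ) _ _ hS (F.fac_mem i) _
      have hra : (s ≫ r) ≫ a⟦(1:ℤ)⟧' = 0 := by
        erw [Category.assoc, hv₂, ← Category.assoc, hsv, zero_comp]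
      obtain ⟨w, hw⟩ := Triangle.coyoneda_exact₃ _ (rot_of_distTriang _ hT1) (s ≫ r)
        (by erw [Preadditive.comp_neg, hra, neg_zero])
      have hw0 : w = 0 := hom_zero_PCat σ
        (show PCat C σ.P {ψ} S from PCat.of _ (Set.mem_singleton _) _ hS) hB'
        (fun a' ha' b' hb' => by
          simp only [Set.mem_singleton_iff] at ha'
          simp only [Set.mem_Iic] at hb'
          subst ha'
          linarith) w
      have hsr : s ≫ r = 0 := hw.trans (by rw [hw0]; exact zero_comp)
      -- step 2 : factor through X piece
      obtain ⟨s₀, hs₀⟩ := Triangle.coyoneda_exact₃ _ hT3 s hsr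
      have hsg : s₀ ≫ g = 0 :=
        σ.hom_zero ψ (F.phase i) (lt_of_le_of_lt hci hψ) _ _ hS (F.fac_mem i) _
      obtain ⟨w₂, hw₂⟩ := Triangle.coyoneda_exact₂ _ hT s₀ hsg
      have hwb : w₂ ≫ b = 0 := hom_zero_PCat σ
        (show PCat C σ.P {ψ} S from PCat.of _ (Set.mem_singleton _) _ hS) hB'
        (fun a' ha' b' hb' => by
          simp only [Set.mem_singleton_iff] at ha'
          simp only [Set.mem_Iic] at hb'
          subst ha'
          linarith) _
      have hfin : s = (w₂ ≫ f) ≫ q := by rw [hs₀, hw₂]; rfl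
      erw [hfin, Category.assoc, ← hu₁, ← Category.assoc, hwb, zero_comp]

lemma mem_Ioc_of {X : C} (h1 : PCat C σ.P (Set.Ioi (0:ℝ)) X)
    (h2 : PCat C σ.P (Set.Iic (1:ℝ)) X) : PCat C σ.P (Set.Ioc (0:ℝ) 1) X := by
  by_cases hX : IsZero X
  · exact PCat.zero _ hX
  obtain ⟨F⟩ := σ.HN X hX
  have h := HN_obj_mem σ F (I := Set.Ioc (0:ℝ) 1) (Fin.last F.n)
    (fun j _ => HN_phase_mem σ F h1 h2 j)
  rwa [F.obj_last] at h

lemma ss_of_P {E : C} {φ : ℝ} (h0 : 0 < φ) (h1 : φ ≤ 1) (hE : E ∈ σ.P φ)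
    (hnz : ¬ IsZero E) : SemistableOn C σ.Z (PCat C σ.P (Set.Ioc 0 1)) E := by
  refine ⟨PCat.of φ (Set.mem_Ioc.2 ⟨h0, h1⟩) E hE, hnz, ?_⟩
  intro A Q f g h hT hA hQ hAnz
  obtain ⟨FA⟩ := σ.HN A hAnz
  have hnA := HN_pos_n σ FA hAnz
  have hphA : ∀ j, FA.phase j ∈ Set.Ioc (0:ℝ) 1 :=
    HN_phase_mem σ FA (PCat_mono (fun x hx => hx.1) hA) (PCat_mono (fun x hx => hx.2) hA)
  have hψφ : FA.phase ⟨0, hnA⟩ ≤ φ := by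
    by_contra hlt
    push_neg at hlt
    obtain ⟨s, hs⟩ := HN_map_from_top' σ FA hnA
    have hsf : s ≫ f = 0 := σ.hom_zero _ φ hlt _ _ (FA.fac_mem _) hE _
    obtain ⟨w, hw⟩ := Triangle.coyoneda_exact₂ _ (inv_rot_of_distTriang _ hT) s hsf
    have hQ' : PCat C σ.P (Set.Ioc (-1:ℝ) 0) (Q⟦(-1:ℤ)⟧) :=
      PCat_shift σ (-1) hQ (fun t ht => by
        constructor
        · push_cast
          linarith [ht.1]
        · push_cast
          linarith [ht.2])
    have hw0 : w = 0 := hom_zero_PCat σ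
      (show PCat C σ.P {FA.phase ⟨0, hnA⟩} _ from
        PCat.of _ (Set.mem_singleton _) _ (FA.fac_mem _)) hQ'
      (fun a' ha' b' hb' => by
        simp only [Set.mem_singleton_iff] at ha'
        subst ha'
        have := (hphA ⟨0, hnA⟩).1
        have := hb'.2
        linarith) w
    exact hs (by rw [hw, hw0]; exact zero_comp)
  have hargE : phaseOf (σ.Z E) = φ := phaseOf_P σ h0 h1 hE hnz
  have hargA : (σ.Z A).arg ≤ Real.pi * FA.phase ⟨0, hnA⟩ := by
    have harg := HN_Z_arg_le σ FA hphA (Fin.last FA.n) (by rwa [FA.obj_last])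
      (hphA ⟨0, hnA⟩).1 (hphA ⟨0, hnA⟩).2 (fun j _ =>
        FA.phase_strictAnti.antitone (show (⟨0, hnA⟩ : Fin FA.n) ≤ j from by
          rw [Fin.le_def]
          exact Nat.zero_le _))
    rwa [FA.obj_last] at harg
  rw [hargE, phaseOf, div_le_iff₀ Real.pi_pos]
  have hπ := Real.pi_pos
  nlinarith [hargA]

end Cat
end StabProof

open StabProof

/-- Proposition 5.3 of the paper, one direction: given a stability condition `σ = (Z,P)`,
the subcategory `𝒜 = P((0,1])` is the heart of a bounded t-structure on `C`, the central
charge `Z` is a stability function on `𝒜` with the Harder–Narasimhan property, and the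
`Z`-semistable objects of `𝒜` are exactly the nonzero objects of the `P(φ)` with
`0 < φ ≤ 1`. -/
theorem stabilityCondition_gives_heart_and_stability_function
    (σ : StabilityCondition C) :
    (∃ t : TStructure C, TStructureIsBounded C t ∧
      ∀ X : C, heartP C t X ↔ PCat C σ.P (Set.Ioc 0 1) X) ∧
    IsStabilityFunctionOn C σ.Z (PCat C σ.P (Set.Ioc 0 1)) ∧
    HasHNPropertyOn C σ.Z (PCat C σ.P (Set.Ioc 0 1)) ∧
    (∀ E : C, SemistableOn C σ.Z (PCat C σ.P (Set.Ioc 0 1)) E ↔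
      ∃ φ : ℝ, 0 < φ ∧ φ ≤ 1 ∧ E ∈ σ.P φ ∧ ¬ IsZero E) := by
  refine ⟨?_, ?_, ?_, ?_⟩
  · -- the t-structure
    refine ⟨{ le := fun n X => PCat C σ.P (Set.Ioi (-(n:ℝ))) X
              ge := fun n X => PCat C σ.P (Set.Iic (1-(n:ℝ))) X
              le_isClosedUnderIsomorphisms := fun n => ⟨fun e hX => PCat.iso _ _ e hX⟩
              ge_isClosedUnderIsomorphisms := fun n => ⟨fun e hX => PCat.iso _ _ e hX⟩
              le_shift := fun n a n' hh X hX => PCat_shift σ a hX (fun t ht => by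
                simp only [Set.mem_Ioi] at ht ⊢
                have hcast : (a:ℝ) + (n':ℝ) = (n:ℝ) := by exact_mod_cast hh
                linarith)
              ge_shift := fun n a n' hh X hX => PCat_shift σ a hX (fun t ht => by
                simp only [Set.mem_Iic] at ht ⊢
                have hcast : (a:ℝ) + (n':ℝ) = (n:ℝ) := by exact_mod_cast hh
                linarith)
              zero' := fun X Y fm hX hY => hom_zero_PCat σ hX hY (fun a' ha' b' hb' => by
                simp only [Set.mem_Ioi] at ha'
                simp only [Set.mem_Iic] at hb'
                push_cast at ha' hb'
                linarith) fm
              le_zero_le := fun X hX => PCat_mono (fun t ht => by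
                simp only [Set.mem_Ioi] at ht ⊢
                push_cast at ht ⊢
                linarith) hX
              ge_one_le := fun X hX => PCat_mono (fun t ht => by
                simp only [Set.mem_Iic] at ht ⊢
                push_cast at ht ⊢
                linarith) hX
              exists_triangle_zero_one := fun A => by
                obtain ⟨A', B', f, g, h, hT, hA', hB'⟩ := trunc σ 0 A
                refine ⟨A', B', ?_, ?_, f, g, h, hT⟩
                · exact PCat_mono (fun t ht => by
                    simp only [Set.mem_Ioi] at ht ⊢
                    push_cast
                    linarith) hA'
                · exact PCat_mono (fun t ht => by
                    simp only [Set.mem_Iic] at ht ⊢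
                    push_cast
                    linarith) hB' }, ?_, ?_⟩
    · -- bounded
      intro X
      by_cases hX : IsZero X
      · exact ⟨0, 0, PCat.zero _ hX, PCat.zero _ hX⟩
      obtain ⟨F⟩ := σ.HN X hX
      have hn := HN_pos_n σ F hX
      have hmem : PCat C σ.P
          (Set.Icc (F.phase ⟨F.n - 1, by omega⟩) (F.phase ⟨0, hn⟩)) X := by
        have h := HN_obj_mem σ F
          (I := Set.Icc (F.phase ⟨F.n - 1, by omega⟩) (F.phase ⟨0, hn⟩)) (Fin.last F.n)
          (fun j _ => ⟨F.phase_strictAnti.antitone (by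
              rw [Fin.le_def]
              exact (show (j:ℕ) ≤ F.n - 1 from by have := j.isLt; omega)),
            F.phase_strictAnti.antitone (by
              rw [Fin.le_def]
              exact Nat.zero_le _)⟩)
        rwa [F.obj_last] at h
      refine ⟨⌊1 - F.phase ⟨0, hn⟩⌋, ⌊-(F.phase ⟨F.n - 1, by omega⟩)⌋ + 1,
        PCat_mono (fun t ht => ?_) hmem, PCat_mono (fun t ht => ?_) hmem⟩
      · simp only [Set.mem_Ioi]
        have h1 := Int.lt_floor_add_one (-(F.phase ⟨F.n - 1, by omega⟩))
        have h2 := ht.1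
        push_cast
        linarith
      · simp only [Set.mem_Iic]
        have h1 := Int.floor_le (1 - F.phase ⟨0, hn⟩)
        have h2 := ht.2
        linarith
    · -- heart
      intro X
      constructor
      · rintro ⟨hle, hge⟩
        refine mem_Ioc_of σ (PCat_mono (fun t ht => ?_) hle) (PCat_mono (fun t ht => ?_) hge)
        · simp only [Set.mem_Ioi] at ht ⊢
          push_cast at ht
          linarith
        · simp only [Set.mem_Iic] at ht ⊢
          push_cast at ht
          linarith
      · intro hX
        constructor
        · exact PCat_mono (fun t ht => by
            simp only [Set.mem_Ioi]
            push_cast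
            linarith [ht.1]) hX
        · exact PCat_mono (fun t ht => by
            simp only [Set.mem_Iic]
            push_cast
            linarith [ht.2]) hX
  · -- stability function
    intro E hE hnz
    have hsec := Z_sector σ hE hnz
    refine ⟨‖σ.Z E‖, (σ.Z E).arg / Real.pi, norm_pos_iff.mpr hsec.ne_zero,
      div_pos hsec.arg_pos Real.pi_pos, (div_le_one Real.pi_pos).2 hsec.arg_le_pi, ?_⟩
    have hπ : (Real.pi : ℂ) ≠ 0 := by exact_mod_cast Real.pi_ne_zero
    have hc : (Real.pi : ℂ) * (((σ.Z E).arg / Real.pi : ℝ) : ℂ) * Complex.I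
        = ((σ.Z E).arg : ℂ) * Complex.I := by
      push_cast
      field_simp
    rw [hc]
    exact (Complex.norm_mul_exp_arg_mul_I (σ.Z E)).symm
  · -- HN property
    intro E hE hnz
    obtain ⟨F⟩ := σ.HN E hnz
    have hph : ∀ j, F.phase j ∈ Set.Ioc (0:ℝ) 1 :=
      HN_phase_mem σ F (PCat_mono (fun x hx => hx.1) hE) (PCat_mono (fun x hx => hx.2) hE)
    refine ⟨F.n, F.obj, F.fac, F.obj_zero, F.obj_last, ?_, ?_, F.triangle, ?_⟩
    · intro j
      exact HN_obj_mem σ F j (fun i _ => hph i)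
    · intro j
      exact ss_of_P σ (hph j).1 (hph j).2 (F.fac_mem j) (F.fac_nonzero j)
    · intro p q hpq
      simp only []
      rw [phaseOf_P σ (hph q).1 (hph q).2 (F.fac_mem q) (F.fac_nonzero q),
        phaseOf_P σ (hph p).1 (hph p).2 (F.fac_mem p) (F.fac_nonzero p)]
      exact F.phase_strictAnti hpq
  · -- semistable characterization
    intro E
    constructor
    · rintro ⟨hE𝒜, hEnz, hcond⟩
      obtain ⟨F⟩ := σ.HN E hEnz
      have hn := HN_pos_n σ F hEnz
      have hph : ∀ j, F.phase j ∈ Set.Ioc (0:ℝ) 1 :=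
        HN_phase_mem σ F (PCat_mono (fun x hx => hx.1) hE𝒜) (PCat_mono (fun x hx => hx.2) hE𝒜)
      by_cases hn1 : F.n = 1
      · obtain ⟨f, g, h, hT⟩ := F.triangle ⟨0, hn⟩
        have hz : IsZero (F.obj (⟨0, hn⟩ : Fin F.n).castSucc) := by
          have e : (⟨0, hn⟩ : Fin F.n).castSucc = (0 : Fin (F.n+1)) := by ext; simp
          rw [e]
          exact F.obj_zero
        have hiso : IsIso g := (Triangle.isZero₁_iff_isIso₂ _ hT).1 hz
        have e3 : F.obj (⟨0, hn⟩ : Fin F.n).succ = E := by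
          have e2 : (⟨0, hn⟩ : Fin F.n).succ = Fin.last F.n := by
            ext
            have := Fin.val_succ (⟨0, hn⟩ : Fin F.n)
            simp only [this, Fin.val_last]
            omega
          rw [e2, F.obj_last]
        refine ⟨F.phase ⟨0, hn⟩, (hph _).1, (hph _).2, ?_, hEnz⟩
        exact σ.P_iso _ _ _ ((asIso g).symm ≪≫ eqToIso e3) (F.fac_mem _)
      · exfalso
        have hn2 : 2 ≤ F.n := by omega
        obtain ⟨f, g, h, hT⟩ := F.triangle ⟨F.n - 1, by omega⟩
        have e3 : F.obj (⟨F.n - 1, by omega⟩ : Fin F.n).succ = E := by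
          have e2 : (⟨F.n - 1, by omega⟩ : Fin F.n).succ = Fin.last F.n := by
            ext
            have := Fin.val_succ (⟨F.n - 1, by omega⟩ : Fin F.n)
            simp only [this, Fin.val_last]
            omega
          rw [e2, F.obj_last]
        have hAmem : PCat C σ.P (Set.Ioc (0:ℝ) 1)
            (F.obj (⟨F.n - 1, by omega⟩ : Fin F.n).castSucc) :=
          HN_obj_mem σ F _ (fun i _ => hph i)
        have hAnz : ¬ IsZero (F.obj (⟨F.n - 1, by omega⟩ : Fin F.n).castSucc) := by
          intro hzA
          have hmap := HN_map_from_top σ F hn (F.n - 2) (by omega)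
          have e4 : (⟨F.n - 2, by omega⟩ : Fin F.n).succ
              = (⟨F.n - 1, by omega⟩ : Fin F.n).castSucc := by
            ext
            have h5 := Fin.val_succ (⟨F.n - 2, by omega⟩ : Fin F.n)
            have h6 := Fin.coe_castSucc (⟨F.n - 1, by omega⟩ : Fin F.n)
            simp only [h5, h6]
            omega
          rw [e4] at hmap
          obtain ⟨s, hs⟩ := hmap
          exact hs (hzA.eq_of_tgt s 0)
        have hT' : Triangle.mk (f ≫ eqToHom e3) (eqToHom e3.symm ≫ g) h ∈ distTriang C := by
          refine isomorphic_distinguished _ hT _ ?_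
          refine Triangle.isoMk _ _ (Iso.refl _) (eqToIso e3).symm (Iso.refl _) ?_ ?_ ?_
          · show (f ≫ eqToHom e3) ≫ eqToHom e3.symm = 𝟙 _ ≫ f
            simp
          · exact Category.comp_id _
          · show h ≫ (shiftFunctor C (1:ℤ)).map (𝟙 _) = 𝟙 _ ≫ h
            rw [CategoryTheory.Functor.map_id, Category.comp_id, Category.id_comp]
        have hfac𝒜 : PCat C σ.P (Set.Ioc (0:ℝ) 1) (F.fac ⟨F.n - 1, by omega⟩) :=
          PCat.of _ (hph _) _ (F.fac_mem _)
        have hle := hcond _ _ (f ≫ eqToHom e3) (eqToHom e3.symm ≫ g) h hT' hAmem hfac𝒜 hAnz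
        have hZE : σ.Z E = σ.Z (F.obj (⟨F.n - 1, by omega⟩ : Fin F.n).castSucc)
            + σ.Z (F.fac ⟨F.n - 1, by omega⟩) := by
          have hadd : σ.Z (F.obj (⟨F.n - 1, by omega⟩ : Fin F.n).succ)
              = σ.Z (F.obj (⟨F.n - 1, by omega⟩ : Fin F.n).castSucc)
                + σ.Z (F.fac ⟨F.n - 1, by omega⟩) := σ.additive _ hT
          rw [← hadd, e3]
        obtain ⟨m, hm, hZf⟩ := σ.central _ _ (F.fac_mem ⟨F.n - 1, by omega⟩)
          (F.fac_nonzero ⟨F.n - 1, by omega⟩)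
        have hsecf : Sector (σ.Z (F.fac ⟨F.n - 1, by omega⟩)) := by
          rw [hZf]
          exact sector_exp hm (hph _).1 (hph _).2
        have hsecA : Sector (σ.Z (F.obj (⟨F.n - 1, by omega⟩ : Fin F.n).castSucc)) := by
          rcases HN_Z σ F hph (⟨F.n - 1, by omega⟩ : Fin F.n).castSucc with hz | ⟨hs, _⟩
          · exact absurd hz hAnz
          · exact hs
        have hargA : Real.pi * F.phase ⟨F.n - 2, by omega⟩
            ≤ (σ.Z (F.obj (⟨F.n - 1, by omega⟩ : Fin F.n).castSucc)).arg :=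
          HN_Z_arg_ge σ F hph _ hAnz (hph ⟨F.n - 2, by omega⟩).1 (hph ⟨F.n - 2, by omega⟩).2
            (fun j hj => F.phase_strictAnti.antitone (by
              rw [Fin.le_def]
              rw [Fin.coe_castSucc] at hj
              exact (show (j:ℕ) ≤ F.n - 2 from by omega)))
        have hargf : (σ.Z (F.fac ⟨F.n - 1, by omega⟩)).arg
            = Real.pi * F.phase ⟨F.n - 1, by omega⟩ := by
          rw [hZf]
          exact arg_exp hm (hph _).1 (hph _).2
        have hlt : (σ.Z (F.fac ⟨F.n - 1, by omega⟩)).arg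
            < (σ.Z (F.obj (⟨F.n - 1, by omega⟩ : Fin F.n).castSucc)).arg := by
          rw [hargf]
          have hphlt : F.phase ⟨F.n - 1, by omega⟩ < F.phase ⟨F.n - 2, by omega⟩ :=
            F.phase_strictAnti (by
              rw [Fin.lt_def]
              exact (show F.n - 2 < F.n - 1 from by omega))
          have hπ := Real.pi_pos
          nlinarith
        have hargE : (σ.Z E).arg
            < (σ.Z (F.obj (⟨F.n - 1, by omega⟩ : Fin F.n).castSucc)).arg := by
          rw [hZE]
          exact sector_arg_add_lt hsecA hsecf hlt
        unfold phaseOf at hle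
        have h5 := mul_le_mul_of_nonneg_right hle (le_of_lt Real.pi_pos)
        rw [div_mul_cancel₀ _ Real.pi_ne_zero, div_mul_cancel₀ _ Real.pi_ne_zero] at h5
        linarith
    · rintro ⟨φ, h0, h1, hE, hnz⟩
      exact ss_of_P σ h0 h1 hE hnz
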